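/- arXiv:2212.03225 — 3 statements merged into one kernel-verified Lean document; each statement's English description precedes it below -/
import Mathlib

section
/- Let P be symmetric positive definite and A real n×n with PA + AᵀP negative definite. Then all eigenvalues of A have strictly negative real part (A is Hurwitz). -/
open Matrix
open scoped ComplexOrder

private lemma posDef_map_ofReal {n : ℕ} {P : Matrix (Fin n) (Fin n) ℝ} (hP : P.PosDef) :
    (P.map Complex.ofReal).PosDef := by
  have hsemi : (P.map Complex.ofReal).PosSemidef := by
    obtain ⟨B, hB⟩ : ∃ B : Matrix (Fin n) (Fin n) ℝ, P = Bᴴ * B := by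
      open scoped MatrixOrder Matrix.Norms.L2Operator in
      obtain ⟨B, hB⟩ := CStarAlgebra.nonneg_iff_eq_star_mul_self.mp hP.posSemidef.nonneg
      exact ⟨B, hB⟩
    suffices hBc : P.map Complex.ofReal = (B.map Complex.ofReal)ᴴ * B.map Complex.ofReal by
      rw [hBc]; exact posSemidef_conjTranspose_mul_self _
    have : (Bᴴ).map (Complex.ofRealHom : ℝ →+* ℂ) = (B.map Complex.ofReal)ᴴ :=
      Matrix.conjTranspose_map _ (fun x => by simp [Complex.conj_ofReal])
    calc P.map Complex.ofReal = (Bᴴ * B).map (Complex.ofRealHom : ℝ →+* ℂ) := by rw [hB]; rfl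
      _ = (Bᴴ).map (Complex.ofRealHom : ℝ →+* ℂ) * B.map (Complex.ofRealHom : ℝ →+* ℂ) :=
          Matrix.map_mul
      _ = (B.map Complex.ofReal)ᴴ * B.map Complex.ofReal := by rw [this]; rfl
  have hdet : (P.map Complex.ofReal).det ≠ 0 := by
    have : (P.map Complex.ofReal).det = Complex.ofReal P.det :=
      ((Complex.ofRealHom : ℝ →+* ℂ).map_det P).symm
    rw [this]
    exact_mod_cast hP.det_pos.ne'
  refine posDef_iff_dotProduct_mulVec.mpr ⟨hsemi.isHermitian, fun x hx => ?_⟩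
  refine lt_of_le_of_ne (hsemi.dotProduct_mulVec_nonneg x) fun h => ?_
  have h0 : (P.map Complex.ofReal) *ᵥ x = 0 :=
    (hsemi.dotProduct_mulVec_zero_iff x).mp h.symm
  exact hdet (Matrix.exists_mulVec_eq_zero_iff.mp ⟨x, hx, h0⟩)

theorem lyapunov_implies_hurwitz (n : ℕ) (A P : Matrix (Fin n) (Fin n) ℝ)
    (hP : P.PosDef) (hL : (-(P * A + Aᵀ * P)).PosDef) :
    ∀ μ ∈ spectrum ℂ (A.map (Complex.ofReal)), μ.re < 0 := by
  intro μ hμ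
  set Ac : Matrix (Fin n) (Fin n) ℂ := A.map Complex.ofReal with hAc
  set Pc : Matrix (Fin n) (Fin n) ℂ := P.map Complex.ofReal with hPc
  -- get an eigenvector
  have hdet : (μ • (1 : Matrix (Fin n) (Fin n) ℂ) - Ac).det = 0 := by
    by_contra hne
    have : IsUnit (μ • (1 : Matrix (Fin n) (Fin n) ℂ) - Ac) :=
      (Matrix.isUnit_iff_isUnit_det _).mpr (Ne.isUnit hne)
    rw [spectrum.mem_iff] at hμ
    exact hμ (by simpa [Matrix.scalar, Algebra.algebraMap_eq_smul_one] using this)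
  obtain ⟨v, hv, hveq⟩ := Matrix.exists_mulVec_eq_zero_iff.mpr hdet
  have heig : Ac *ᵥ v = μ • v := by
    have := hveq
    rw [Matrix.sub_mulVec, Matrix.smul_mulVec, Matrix.one_mulVec, sub_eq_zero] at this
    exact this.symm
  -- positive quantities
  have hPcpos := (posDef_map_ofReal hP).dotProduct_mulVec_pos hv
  have hLcpos := (posDef_map_ofReal hL).dotProduct_mulVec_pos hv
  set s : ℂ := star v ⬝ᵥ Pc *ᵥ v with hs
  -- rewrite mapped Lyapunov matrix
  have hmap : ((-(P * A + Aᵀ * P)).map Complex.ofReal) = -(Pc * Ac + Acᴴ * Pc) := by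
    have hAT : (Aᵀ).map (Complex.ofRealHom : ℝ →+* ℂ) = Acᴴ := by
      rw [hAc, ← Matrix.conjTranspose_map _ (fun x => by simp [Complex.conj_ofReal])]
      rfl
    have : ((-(P * A + Aᵀ * P)).map Complex.ofReal) =
        (Complex.ofRealHom.mapMatrix : Matrix (Fin n) (Fin n) ℝ →+* Matrix (Fin n) (Fin n) ℂ)
          (-(P * A + Aᵀ * P)) := rfl
    rw [this, map_neg, map_add]
    simp only [RingHom.mapMatrix_apply, Matrix.map_mul]
    rw [hAT]
    rfl
  -- compute the quadratic form of the Lyapunov matrix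
  have hcalc : star v ⬝ᵥ ((-(P * A + Aᵀ * P)).map Complex.ofReal) *ᵥ v
      = -((μ + starRingEnd ℂ μ) * s) := by
    rw [hmap]
    have h1 : star v ⬝ᵥ (Pc * Ac) *ᵥ v = μ * s := by
      rw [← Matrix.mulVec_mulVec, heig, Matrix.mulVec_smul, dotProduct_smul, hs,
        smul_eq_mul]
    have h2 : star v ⬝ᵥ (Acᴴ * Pc) *ᵥ v = starRingEnd ℂ μ * s := by
      rw [← Matrix.mulVec_mulVec, Matrix.dotProduct_mulVec, Matrix.vecMul_conjTranspose,
        star_star, heig]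
      rw [hs, Matrix.dotProduct_mulVec, star_smul]
      rw [Matrix.smul_vecMul, smul_dotProduct, smul_eq_mul, Matrix.dotProduct_mulVec]
      rfl
    rw [Matrix.neg_mulVec, dotProduct_neg, Matrix.add_mulVec, dotProduct_add,
      h1, h2, add_mul]
  rw [hcalc] at hLcpos
  -- pass to real parts
  have hs_re : 0 < s.re := (Complex.lt_def.mp hPcpos).1
  have hs_im : s.im = 0 := ((Complex.lt_def.mp hPcpos).2).symm
  have ht_re : 0 < (-((μ + starRingEnd ℂ μ) * s)).re := (Complex.lt_def.mp hLcpos).1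
  have : (-((μ + starRingEnd ℂ μ) * s)).re = -(2 * μ.re * s.re) := by
    simp only [Complex.neg_re, Complex.mul_re, Complex.add_re, Complex.add_im,
      Complex.conj_re, Complex.conj_im, hs_im]
    ring
  rw [this] at ht_re
  nlinarith
end

section
/- Lemma 2 of the paper: Let W ∈ ℝ^{n×n} be symmetric positive definite, R ∈ ℝ^{n×n} invertible, F ∈ ℝ^{m×n}, K = FR⁻¹, and β > 0. If the block matrix [[βI, F],[Fᵀ, (W⁻¹R)ᵀ + W⁻¹R − I]] is positive semidefinite, then the spectral norm of KW is at most √β. -/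
open Matrix

noncomputable def specNorm {m n : ℕ} (M : Matrix (Fin m) (Fin n) ℝ) : ℝ :=
  ‖LinearMap.toContinuousLinearMap (Matrix.toEuclideanLin M)‖

theorem lemma2 (m n : ℕ) (W R : Matrix (Fin n) (Fin n) ℝ) (hW : W.PosDef) (hR : IsUnit R)
    (F : Matrix (Fin m) (Fin n) ℝ) (K : Matrix (Fin m) (Fin n) ℝ) (hK : K = F * R⁻¹)
    (β : ℝ) (hβ : 0 < β)
    (h : (Matrix.fromBlocks (β • (1 : Matrix (Fin m) (Fin m) ℝ)) F Fᵀ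
          ((W⁻¹ * R)ᵀ + W⁻¹ * R - 1)).PosSemidef) :
    specNorm (K * W) ≤ Real.sqrt β := by
  set X := W⁻¹ * R with hX
  -- key quadratic inequality
  have key : ∀ v : Fin n → ℝ, (F *ᵥ v) ⬝ᵥ (F *ᵥ v) ≤ β * ((X *ᵥ v) ⬝ᵥ (X *ᵥ v)) := by
    intro v
    have hq := h.dotProduct_mulVec_nonneg (Sum.elim ((-(1/β)) • (F *ᵥ v)) v)
    rw [fromBlocks_mulVec] at hq
    have hstar : star (Sum.elim ((-(1/β)) • (F *ᵥ v)) v)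
        = Sum.elim ((-(1/β)) • (F *ᵥ v)) v := by simp
    rw [hstar] at hq
    have hcomp1 : (Sum.elim ((-(1/β)) • (F *ᵥ v)) v) ∘ Sum.inl = (-(1/β)) • (F *ᵥ v) := rfl
    have hcomp2 : (Sum.elim ((-(1/β)) • (F *ᵥ v)) v) ∘ Sum.inr = v := rfl
    rw [hcomp1, hcomp2] at hq
    rw [show (Sum.elim ((-(1/β)) • (F *ᵥ v)) v : Fin m ⊕ Fin n → ℝ)
        = ((-(1/β)) • (F *ᵥ v)) ⊕ᵥ v from rfl] at hq
    rw [sumElim_dotProduct_sumElim] at hq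
    set w := F *ᵥ v with hw
    have e1 : (β • (1 : Matrix (Fin m) (Fin m) ℝ)) *ᵥ ((-(1/β)) • w) = (-1 : ℝ) • w := by
      rw [Matrix.smul_mulVec, one_mulVec, smul_smul]
      congr 1
      field_simp
    have e2 : v ⬝ᵥ (Xᵀ *ᵥ v) = (X *ᵥ v) ⬝ᵥ v := by
      rw [dotProduct_mulVec, vecMul_transpose]
    have e3 : v ⬝ᵥ (Fᵀ *ᵥ ((-(1/β)) • w)) = ((-(1/β)) • w) ⬝ᵥ w := by
      rw [dotProduct_mulVec, vecMul_transpose, dotProduct_comm]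
    have e4 : ((-(1/β)) • w) ⬝ᵥ w = (-(1/β)) * (w ⬝ᵥ w) := by
      rw [smul_dotProduct]; rfl
    have e5 : ((-(1/β)) • w) ⬝ᵥ ((-1 : ℝ) • w + w) = 0 := by
      simp
    -- expand hq
    rw [sub_mulVec, add_mulVec] at hq
    simp only [one_mulVec] at hq
    rw [e1] at hq
    have e6 : ((-(1/β)) • w) ⬝ᵥ ((-1:ℝ) • w) = (1/β) * (w ⬝ᵥ w) := by
      rw [smul_dotProduct, dotProduct_smul]; simp
    simp only [dotProduct_add, dotProduct_sub] at hq
    rw [e2, e3, e4, e6] at hq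
    have hyoung : 0 ≤ (X *ᵥ v - v) ⬝ᵥ (X *ᵥ v - v) :=
      Finset.sum_nonneg fun i _ => mul_self_nonneg _
    rw [dotProduct_sub, sub_dotProduct, sub_dotProduct] at hyoung
    have hcm : v ⬝ᵥ (X *ᵥ v) = (X *ᵥ v) ⬝ᵥ v := dotProduct_comm _ _
    have h7 : (1/β) * (w ⬝ᵥ w) ≤ (X *ᵥ v) ⬝ᵥ (X *ᵥ v) := by linarith
    calc w ⬝ᵥ w = β * ((1/β) * (w ⬝ᵥ w)) := by field_simp
      _ ≤ β * ((X *ᵥ v) ⬝ᵥ (X *ᵥ v)) := mul_le_mul_of_nonneg_left h7 hβ.le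
  -- with v = R⁻¹ * W * y
  have hRdet : IsUnit R.det := (isUnit_iff_isUnit_det R).mp hR
  have hWdet : IsUnit W.det := (isUnit_iff_isUnit_det W).mp hW.isUnit
  have key2 : ∀ y : Fin n → ℝ,
      ((K * W) *ᵥ y) ⬝ᵥ ((K * W) *ᵥ y) ≤ β * (y ⬝ᵥ y) := by
    intro y
    have := key ((R⁻¹ * W) *ᵥ y)
    rw [mulVec_mulVec, mulVec_mulVec] at this
    have h1 : F * (R⁻¹ * W) = K * W := by rw [hK, Matrix.mul_assoc]
    have h2 : X * (R⁻¹ * W) = 1 := by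
      rw [hX]
      calc W⁻¹ * R * (R⁻¹ * W) = W⁻¹ * (R * R⁻¹) * W := by
            rw [Matrix.mul_assoc, Matrix.mul_assoc, Matrix.mul_assoc]
        _ = W⁻¹ * W := by rw [mul_nonsing_inv R hRdet, Matrix.mul_one]
        _ = 1 := nonsing_inv_mul W hWdet
    rw [h1, h2, one_mulVec] at this
    exact this
  -- conclude
  unfold specNorm
  apply ContinuousLinearMap.opNorm_le_bound _ (Real.sqrt_nonneg β)
  intro x
  rw [LinearMap.coe_toContinuousLinearMap']
  have hx : (toEuclideanLin (K * W)) x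
      = (WithLp.equiv 2 (Fin m → ℝ)).symm ((K * W) *ᵥ (WithLp.equiv 2 (Fin n → ℝ)) x) :=
    Matrix.toEuclideanLin_apply _ _
  set y := (WithLp.equiv 2 (Fin n → ℝ)) x with hy
  have hnx : ‖x‖ ^ 2 = y ⬝ᵥ y := by
    rw [EuclideanSpace.norm_eq, Real.sq_sqrt (by positivity)]
    simp only [dotProduct, sq, Real.norm_eq_abs, ← abs_mul, abs_mul_self]
    rfl
  have hnMx : ‖(toEuclideanLin (K * W)) x‖ ^ 2
      = ((K * W) *ᵥ y) ⬝ᵥ ((K * W) *ᵥ y) := by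
    rw [hx, EuclideanSpace.norm_eq, Real.sq_sqrt (by positivity)]
    simp [dotProduct, sq]
  have h1 : ‖(toEuclideanLin (K * W)) x‖ ^ 2 ≤ β * ‖x‖ ^ 2 := by
    rw [hnMx, hnx]; exact key2 y
  have h2 : ‖(toEuclideanLin (K * W)) x‖ ≤ Real.sqrt (β * ‖x‖ ^ 2) := by
    rw [← Real.sqrt_sq (norm_nonneg _)]
    exact Real.sqrt_le_sqrt h1
  calc ‖(toEuclideanLin (K * W)) x‖ ≤ Real.sqrt (β * ‖x‖ ^ 2) := h2
    _ = Real.sqrt β * ‖x‖ := by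
        rw [Real.sqrt_mul (le_of_lt hβ), Real.sqrt_sq (norm_nonneg _)]
end

section
/- Lemma 3 of the paper: Let W ∈ ℝ^{n×n} symmetric positive definite, R₀ ∈ ℝ^{n×n} symmetric positive definite, R ∈ ℝ^{n×n} invertible, F ∈ ℝ^{m×n}, K = FR⁻¹, β > 0, and define T₁ = (W⁻¹R)ᵀ(W⁻¹R₀) + (W⁻¹R₀)ᵀ(W⁻¹R) − (W⁻¹R₀)ᵀ(W⁻¹R₀). If [[βI, F],[Fᵀ, T₁]] is positive semidefinite, then the spectral norm of KW is at most √β. -/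
open Matrix

theorem lemma3 (m n : ℕ) (W R₀ R : Matrix (Fin n) (Fin n) ℝ)
    (hW : W.PosDef) (hR₀ : R₀.PosDef) (hR : IsUnit R)
    (F : Matrix (Fin m) (Fin n) ℝ) (K : Matrix (Fin m) (Fin n) ℝ) (hK : K = F * R⁻¹)
    (β : ℝ) (hβ : 0 < β)
    (h : (Matrix.fromBlocks (β • (1 : Matrix (Fin m) (Fin m) ℝ)) F Fᵀ
          ((W⁻¹ * R)ᵀ * (W⁻¹ * R₀) + (W⁻¹ * R₀)ᵀ * (W⁻¹ * R)
            - (W⁻¹ * R₀)ᵀ * (W⁻¹ * R₀))).PosSemidef) :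
    specNorm (K * W) ≤ Real.sqrt β := by
  have hWdet : IsUnit W.det := isUnit_iff_ne_zero.mpr hW.det_pos.ne'
  have hRdet : IsUnit R.det := (Matrix.isUnit_iff_isUnit_det R).mp hR
  have h1 : R * R⁻¹ = 1 := mul_nonsing_inv R hRdet
  have h2 : W⁻¹ * W = 1 := nonsing_inv_mul W hWdet
  have hAC : (W⁻¹ * R) * (R⁻¹ * W) = 1 := by
    rw [Matrix.mul_assoc, ← Matrix.mul_assoc R, h1, Matrix.one_mul, h2]
  set A := W⁻¹ * R with hAdef
  set B := W⁻¹ * R₀ with hBdef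
  set C := R⁻¹ * W with hCdef
  set T₁ := Aᵀ * B + Bᵀ * A - Bᵀ * B with hT₁
  have hPSD : (Aᵀ * A - T₁).PosSemidef := by
    have hps := posSemidef_conjTranspose_mul_self (A - B)
    rw [conjTranspose_eq_transpose_of_trivial] at hps
    convert hps using 1
    rw [transpose_sub, hT₁]
    noncomm_ring
  have hKWC : K * W = F * C := by
    rw [hK, hCdef, Matrix.mul_assoc]
  -- pointwise quadratic bound
  have key : ∀ x : Fin n → ℝ,
      ((K * W) *ᵥ x) ⬝ᵥ ((K * W) *ᵥ x) ≤ β * (x ⬝ᵥ x) := by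
    intro x
    rw [hKWC]
    set v : Fin n → ℝ := C *ᵥ x with hv
    set y : Fin m → ℝ := F *ᵥ v with hy
    have hyx : (F * C) *ᵥ x = y := by rw [hy, hv, mulVec_mulVec]
    have hAv : A *ᵥ v = x := by rw [hv, mulVec_mulVec, hAC, one_mulVec]
    set u : Fin m → ℝ := (-β⁻¹) • y with hu
    have h0 := h.dotProduct_mulVec_nonneg (Sum.elim u v)
    rw [fromBlocks_mulVec] at h0
    simp only [Sum.elim_comp_inl, Sum.elim_comp_inr] at h0
    have hstar : star (Sum.elim u v) = Sum.elim u v := by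
      simp [star_trivial]
    rw [hstar, sumElim_dotProduct_sumElim] at h0
    have hβu : (β • (1 : Matrix (Fin m) (Fin m) ℝ)) *ᵥ u + F *ᵥ v = 0 := by
      rw [smul_mulVec, one_mulVec, hu, smul_smul, ← hy]
      rw [mul_neg, mul_inv_cancel₀ hβ.ne']
      simp
    rw [hβu, dotProduct_zero, zero_add, dotProduct_add] at h0
    have hFu : v ⬝ᵥ (Fᵀ *ᵥ u) = -β⁻¹ * (y ⬝ᵥ y) := by
      rw [dotProduct_mulVec, vecMul_transpose, ← hy, hu, dotProduct_smul, smul_eq_mul]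
    have hT : v ⬝ᵥ (T₁ *ᵥ v) ≤ x ⬝ᵥ x := by
      have hq := hPSD.dotProduct_mulVec_nonneg v
      rw [star_trivial, sub_mulVec, dotProduct_sub] at hq
      have hq2 : v ⬝ᵥ ((Aᵀ * A) *ᵥ v) = x ⬝ᵥ x := by
        rw [← mulVec_mulVec, dotProduct_mulVec, vecMul_transpose, hAv]
      linarith
    rw [hFu] at h0
    have hxy : 0 ≤ -β⁻¹ * (y ⬝ᵥ y) + x ⬝ᵥ x := by linarith
    have h3 : 0 ≤ β * (-β⁻¹ * (y ⬝ᵥ y) + x ⬝ᵥ x) := mul_nonneg hβ.le hxy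
    have h4 : β * (-β⁻¹ * (y ⬝ᵥ y) + x ⬝ᵥ x) = -(y ⬝ᵥ y) + β * (x ⬝ᵥ x) := by
      field_simp
    rw [hyx]
    linarith
  -- pass to operator norm
  rw [specNorm]
  refine ContinuousLinearMap.opNorm_le_bound _ (Real.sqrt_nonneg β) fun x => ?_
  set x' : Fin n → ℝ := (WithLp.equiv 2 (Fin n → ℝ)) x with hx'
  have hnorm1 : ‖(Matrix.toEuclideanLin (K * W)).toContinuousLinearMap x‖ ^ 2
      = ((K * W) *ᵥ x') ⬝ᵥ ((K * W) *ᵥ x') := by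
    rw [← real_inner_self_eq_norm_sq]
    simp only [LinearMap.coe_toContinuousLinearMap', toEuclideanLin_apply,
      PiLp.inner_apply, RCLike.inner_apply, conj_trivial, dotProduct]
    rfl
  have hnorm2 : ‖x‖ ^ 2 = x' ⬝ᵥ x' := by
    rw [← real_inner_self_eq_norm_sq]
    simp only [PiLp.inner_apply, RCLike.inner_apply, conj_trivial, dotProduct]
    rfl
  calc ‖(Matrix.toEuclideanLin (K * W)).toContinuousLinearMap x‖
      = Real.sqrt (‖(Matrix.toEuclideanLin (K * W)).toContinuousLinearMap x‖ ^ 2) :=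
        (Real.sqrt_sq (norm_nonneg _)).symm
    _ ≤ Real.sqrt (β * ‖x‖ ^ 2) := by
        apply Real.sqrt_le_sqrt
        rw [hnorm1, hnorm2]
        exact key x'
    _ = Real.sqrt β * ‖x‖ := by
        rw [Real.sqrt_mul hβ.le, Real.sqrt_sq (norm_nonneg _)]
end
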